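/- Let X be a quasiprojective variety over an algebraically closed field K, Φ: X → X an endomorphism, V ⊆ X an irreducible curve, and α ∈ X(K). Define S = {n ∈ ℕ₀ : Φ^n(α) ∈ V(K)}. If S contains an infinite arithmetic progression, then S is a finite union of arithmetic progressions. -/

import Mathlib

/-- An arithmetic progression of natural numbers `{m·k + ℓ : k ∈ ℕ₀}`. -/
def IsAPNat (S : Set ℕ) : Prop :=
  ∃ m ℓ : ℕ, S = {n : ℕ | ∃ j : ℕ, n = m * j + ℓ}

/-- Key combinatorial lemma: if `S` is eventually forward-closed under adding `p`
(from threshold `a` on) and contains a full AP `F`, then `S` is a finite union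
of APs. -/
lemma ap_decomp (S : Set ℕ) (p a : ℕ) (hp : 1 ≤ p)
    (hstep : ∀ n, a ≤ n → n ∈ S → n + p ∈ S)
    (F : Set ℕ) (hF : IsAPNat F) (hFS : F ⊆ S) :
    ∃ (M : ℕ) (f : Fin M → Set ℕ), (∀ i, IsAPNat (f i)) ∧ S = ⋃ i, f i := by
  classical
  set T : ℕ → Set ℕ := fun i => {n | n ∈ S ∧ a ≤ n ∧ n % p = i % p} with hT
  have hclimb : ∀ ℓ₀, ℓ₀ ∈ S → a ≤ ℓ₀ → ∀ j, p * j + ℓ₀ ∈ S := by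
    intro ℓ₀ hℓS hℓa j
    induction j with
    | zero => simpa using hℓS
    | succ k ih =>
        have : p * k + ℓ₀ + p ∈ S := hstep _ (by omega) ih
        have e : p * (k + 1) + ℓ₀ = p * k + ℓ₀ + p := by ring
        rwa [e]
  refine ⟨a + p, fun i =>
    if (i : ℕ) < a then (if (i : ℕ) ∈ S then {(i : ℕ)} else F)
    else if h : (T (i : ℕ)).Nonempty then {n | ∃ j, n = p * j + sInf (T (i : ℕ))} else F,
    ?_, ?_⟩
  · intro i
    dsimp only
    by_cases h1 : (i : ℕ) < a
    · by_cases h2 : (i : ℕ) ∈ S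
      · rw [if_pos h1, if_pos h2]
        exact ⟨0, i, by ext n; simp⟩
      · rw [if_pos h1, if_neg h2]; exact hF
    · rw [if_neg h1]
      by_cases h2 : (T (i : ℕ)).Nonempty
      · rw [dif_pos h2]
        exact ⟨p, sInf (T (i : ℕ)), rfl⟩
      · rw [dif_neg h2]; exact hF
  · ext n
    simp only [Set.mem_iUnion]
    constructor
    · intro hn
      by_cases hna : n < a
      · refine ⟨⟨n, by omega⟩, ?_⟩
        rw [if_pos (show n < a from hna), if_pos hn]
        exact rfl
      · push_neg at hna
        have hlt : (n - a) % p < p := Nat.mod_lt _ (by omega)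
        set i₀ : Fin (a + p) := ⟨a + (n - a) % p, by omega⟩ with hi₀
        refine ⟨i₀, ?_⟩
        have hi : ¬ ((i₀ : ℕ) < a) := show ¬ (a + (n - a) % p < a) by omega
        have hmod : n % p = (i₀ : ℕ) % p := by
          show n % p = (a + (n - a) % p) % p
          conv_lhs => rw [show n = a + (n - a) by omega]
          rw [Nat.add_mod, Nat.add_mod a ((n - a) % p), Nat.mod_mod_of_dvd _ dvd_rfl]
        have hmem : n ∈ T (i₀ : ℕ) := ⟨hn, hna, hmod⟩
        have hne : (T (i₀ : ℕ)).Nonempty := ⟨n, hmem⟩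
        rw [if_neg hi, dif_pos hne]
        have hinf := Nat.sInf_mem hne
        have hle : sInf (T (i₀ : ℕ)) ≤ n := Nat.sInf_le hmem
        obtain ⟨hS', ha', hm'⟩ := hinf
        have hmeq : n % p = sInf (T (i₀ : ℕ)) % p := by rw [hmod, hm']
        have hdvd : p ∣ n - sInf (T (i₀ : ℕ)) :=
          (Nat.modEq_iff_dvd' hle).mp hmeq.symm
        obtain ⟨j, hj⟩ := hdvd
        exact ⟨j, by omega⟩
    · rintro ⟨i, hi⟩
      beta_reduce at hi
      by_cases h1 : (i : ℕ) < a
      · by_cases h2 : (i : ℕ) ∈ S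
        · rw [if_pos h1, if_pos h2] at hi
          rw [Set.mem_singleton_iff.mp hi]; exact h2
        · rw [if_pos h1, if_neg h2] at hi
          exact hFS hi
      · rw [if_neg h1] at hi
        by_cases h2 : (T (i : ℕ)).Nonempty
        · rw [dif_pos h2] at hi
          obtain ⟨j, rfl⟩ := hi
          obtain ⟨hS', ha', _⟩ := Nat.sInf_mem h2
          exact hclimb _ hS' ha' j
        · rw [dif_neg h2] at hi
          exact hFS hi

lemma periodic_step {X : Type*} (Φ : X → X) (α : X) (a b : ℕ) (hab : a < b)
    (heq : Φ^[a] α = Φ^[b] α) : ∀ n, a ≤ n → Φ^[n + (b - a)] α = Φ^[n] α := by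
  intro n hn
  have h1 : n + (b - a) = (n - a) + b := by omega
  have h2 : n = (n - a) + a := by omega
  rw [h1, Function.iterate_add_apply, ← heq, ← Function.iterate_add_apply, ← h2]

theorem stmt10 {X : Type*} [TopologicalSpace X] (Φ : X → X) (hΦ : Continuous Φ)
    (V : Set X) (hVcl : IsClosed V) (hVirr : IsIrreducible V)
    (hVcurve : ∀ W : Set X, IsClosed W → W ⊆ V → W.Infinite → W = V)
    (α : X)
    (S : Set ℕ) (hS : S = {n : ℕ | Φ^[n] α ∈ V})
    (hprog : ∃ m ℓ : ℕ, 1 ≤ m ∧ ∀ j : ℕ, m * j + ℓ ∈ S) :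
    ∃ (M : ℕ) (f : Fin M → Set ℕ), (∀ i, IsAPNat (f i)) ∧ S = ⋃ i, f i := by
  obtain ⟨m, ℓ, hm, hAP⟩ := hprog
  have hFS : {n : ℕ | ∃ j : ℕ, n = m * j + ℓ} ⊆ S := by
    rintro n ⟨j, rfl⟩; exact hAP j
  by_cases hinj : Function.Injective (fun n : ℕ => Φ^[n] α)
  · -- infinite orbit case
    set T : Set X := Set.range (fun k : ℕ => Φ^[m * k + ℓ] α) with hTdef
    have hg : Function.Injective (fun k : ℕ => m * k + ℓ) := by
      intro x y h
      simp only at h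
      have : m * x = m * y := by omega
      exact Nat.eq_of_mul_eq_mul_left (by omega) this
    have hTinf : T.Infinite := Set.infinite_range_of_injective (hinj.comp hg)
    have hTV : T ⊆ V := by
      rintro x ⟨k, rfl⟩
      have := hAP k
      rw [hS] at this
      exact this
    have hclV : closure T = V :=
      hVcurve (closure T) isClosed_closure (closure_minimal hTV hVcl)
        (hTinf.mono subset_closure)
    have hΦmT : Φ^[m] '' T ⊆ T := by
      rintro _ ⟨_, ⟨k, rfl⟩, rfl⟩
      refine ⟨k + 1, ?_⟩
      simp only
      rw [show m * (k + 1) + ℓ = m + (m * k + ℓ) by ring, Function.iterate_add_apply]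
    have hΦmV : ∀ x ∈ V, Φ^[m] x ∈ V := by
      intro x hx
      rw [← hclV] at hx ⊢
      have h1 : Φ^[m] '' closure T ⊆ closure (Φ^[m] '' T) :=
        image_closure_subset_closure_image (hΦ.iterate m)
      exact closure_mono hΦmT (h1 ⟨x, hx, rfl⟩)
    have hstep : ∀ n, 0 ≤ n → n ∈ S → n + m ∈ S := by
      intro n _ hn
      rw [hS] at hn ⊢
      simp only [Set.mem_setOf_eq] at hn ⊢
      rw [show n + m = m + n by ring, Function.iterate_add_apply]
      exact hΦmV _ hn
    exact ap_decomp S m 0 hm hstep _ ⟨m, ℓ, rfl⟩ hFS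
  · rw [Function.not_injective_iff] at hinj
    obtain ⟨a, b, hfab, hne⟩ := hinj
    rcases hne.lt_or_gt with h | h
    · have hstep : ∀ n, a ≤ n → n ∈ S → n + (b - a) ∈ S := by
        intro n hn hnS
        rw [hS] at hnS ⊢
        simp only [Set.mem_setOf_eq] at hnS ⊢
        rwa [periodic_step Φ α a b h hfab n hn]
      exact ap_decomp S (b - a) a (by omega) hstep _ ⟨m, ℓ, rfl⟩ hFS
    · have hstep : ∀ n, b ≤ n → n ∈ S → n + (a - b) ∈ S := by
        intro n hn hnS
        rw [hS] at hnS ⊢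
        simp only [Set.mem_setOf_eq] at hnS ⊢
        rwa [periodic_step Φ α b a h hfab.symm n hn]
      exact ap_decomp S (a - b) b (by omega) hstep _ ⟨m, ℓ, rfl⟩ hFS
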